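/- For all n ≥ 1, the number of permutations π of [n] such that π avoids both patterns 312 and 321, and π² avoids 312, equals the n-th Fibonacci number F_n (with F_1 = 1, F_2 = 2, or equivalently standard Fibonacci with F_1 = F_2 = 1 shifted appropriately so that the count is 1, 2, 3, 5, 8, …). -/

import Mathlib

open Equiv Finset

def Avoids312 {n : ℕ} (π : Equiv.Perm (Fin n)) : Prop :=
  ¬ ∃ i j l : Fin n, i < j ∧ j < l ∧ π j < π l ∧ π l < π i

def Avoids321 {n : ℕ} (π : Equiv.Perm (Fin n)) : Prop :=
  ¬ ∃ i j l : Fin n, i < j ∧ j < l ∧ π l < π j ∧ π j < π i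

def NearId {n : ℕ} (π : Equiv.Perm (Fin n)) : Prop :=
  ∀ i : Fin n, (π i : ℕ) ≤ (i : ℕ) + 1 ∧ (i : ℕ) ≤ (π i : ℕ) + 1

lemma upper {n : ℕ} {π : Equiv.Perm (Fin n)} (h1 : Avoids312 π) (h2 : Avoids321 π) :
    ∀ i : Fin n, (π i : ℕ) ≤ (i : ℕ) + 1 := by
  intro i
  by_contra hbad
  push_neg at hbad
  classical
  set T : Finset (Fin n) := Finset.univ.filter (fun p => π p < π i) with hT
  have hcard : T.card = (π i : ℕ) := by
    have himg : T = Finset.image π.symm (Finset.Iio (π i)) := by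
      ext p
      simp only [hT, Finset.mem_filter, Finset.mem_univ, true_and, Finset.mem_image,
        Finset.mem_Iio]
      constructor
      · intro h; exact ⟨π p, h, π.symm_apply_apply p⟩
      · rintro ⟨v, hv, rfl⟩; simpa using hv
    rw [himg, Finset.card_image_of_injective _ π.symm.injective, Fin.card_Iio]
  set T' : Finset (Fin n) := T.filter (fun p => i < p) with hT'
  have hsub : T ⊆ T' ∪ Finset.Iio i := by
    intro p hp
    rcases lt_or_ge p i with h | h
    · exact Finset.mem_union_right _ (Finset.mem_Iio.mpr h)
    · rcases eq_or_lt_of_le h with h' | h'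
      · exfalso
        rw [hT, Finset.mem_filter] at hp
        rw [← h'] at hp
        exact lt_irrefl _ hp.2
      · exact Finset.mem_union_left _ (Finset.mem_filter.mpr ⟨hp, h'⟩)
  have hcard2 : (π i : ℕ) ≤ T'.card + (i : ℕ) := by
    calc (π i : ℕ) = T.card := hcard.symm
    _ ≤ (T' ∪ Finset.Iio i).card := Finset.card_le_card hsub
    _ ≤ T'.card + (Finset.Iio i).card := Finset.card_union_le _ _
    _ = T'.card + (i : ℕ) := by rw [Fin.card_Iio]
  have h2le : 2 ≤ T'.card := by omega
  obtain ⟨a, ha, b, hb, hab⟩ := Finset.one_lt_card.mp h2le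
  rw [hT', Finset.mem_filter, hT, Finset.mem_filter] at ha hb
  rcases lt_or_gt_of_ne hab with hlt | hlt
  · rcases lt_or_gt_of_ne (fun h : π a = π b => hab (π.injective h)) with hv | hv
    · exact h1 ⟨i, a, b, ha.2, hlt, hv, hb.1.2⟩
    · exact h2 ⟨i, a, b, ha.2, hlt, hv, ha.1.2⟩
  · rcases lt_or_gt_of_ne (fun h : π b = π a => hab (π.injective h).symm) with hv | hv
    · exact h1 ⟨i, b, a, hb.2, hlt, hv, ha.1.2⟩
    · exact h2 ⟨i, b, a, hb.2, hlt, hv, hb.1.2⟩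

lemma chain {n : ℕ} {π : Equiv.Perm (Fin n)} (hub : ∀ i : Fin n, (π i : ℕ) ≤ (i : ℕ) + 1)
    (b : Fin n) (hb : (π b : ℕ) + 2 ≤ (b : ℕ)) :
    ∀ k : Fin n, (π b : ℕ) ≤ (k : ℕ) → (k : ℕ) < (b : ℕ) → (π k : ℕ) = (k : ℕ) + 1 := by
  classical
  set v : ℕ := (π b : ℕ) with hv
  have hvn : v < n := lt_trans (by omega) b.isLt
  have small : ∀ p : Fin n, (p : ℕ) < v → (π p : ℕ) < v := by
    intro p hp
    have h1 : (π p : ℕ) ≤ (p : ℕ) + 1 := hub p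
    have hne : π p ≠ π b := fun h => by
      have := π.injective h
      have : (p : ℕ) = (b : ℕ) := by rw [this]
      omega
    have : (π p : ℕ) ≠ v := fun h => hne (Fin.ext h)
    omega
  have surj : ∀ w : ℕ, w < v → ∃ p : Fin n, (p : ℕ) < v ∧ (π p : ℕ) = w := by
    intro w hw
    set v' : Fin n := ⟨v, hvn⟩ with hv'
    have hsub : (Finset.Iio v').image π ⊆ Finset.Iio v' := by
      intro q hq
      obtain ⟨p, hp, rfl⟩ := Finset.mem_image.mp hq
      rw [Finset.mem_Iio] at hp ⊢
      exact Fin.lt_def.mpr (small p (Fin.lt_def.mp hp))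
    have hcards : (Finset.Iio v').card ≤ ((Finset.Iio v').image π).card := by
      rw [Finset.card_image_of_injective _ π.injective]
    have heq := Finset.eq_of_subset_of_card_le hsub hcards
    have hmem : (⟨w, lt_trans hw hvn⟩ : Fin n) ∈ (Finset.Iio v').image π := by
      rw [heq, Finset.mem_Iio]; exact Fin.lt_def.mpr hw
    obtain ⟨p, hp, hpw⟩ := Finset.mem_image.mp hmem
    exact ⟨p, Fin.lt_def.mp (Finset.mem_Iio.mp hp), by rw [hpw]⟩
  suffices H : ∀ m : ℕ, ∀ k : Fin n, (k : ℕ) < m → v ≤ (k : ℕ) → (k : ℕ) < (b : ℕ) → (π k : ℕ) = (k : ℕ) + 1 by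
    exact fun k hk1 hk2 => H ((k : ℕ) + 1) k (by omega) hk1 hk2
  intro m
  induction m with
  | zero => intro k hk; omega
  | succ m IH =>
    intro k hkm hk1 hk2
    have h1 : (π k : ℕ) ≤ (k : ℕ) + 1 := hub k
    have hnev : (π k : ℕ) ≠ v := by
      intro h
      have : π k = π b := Fin.ext h
      have : k = b := π.injective this
      omega
    by_contra hnk
    have hle : (π k : ℕ) ≤ (k : ℕ) := by omega
    rcases Nat.lt_trichotomy ((π k : ℕ)) v with hlt | heqv | hgt
    · obtain ⟨p, hp, hpe⟩ := surj _ hlt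
      have : π p = π k := Fin.ext (by omega)
      have : p = k := π.injective this
      omega
    · exact hnev heqv
    · set w : ℕ := (π k : ℕ) with hw
      have hw1 : 1 ≤ w := by omega
      set j : Fin n := ⟨w - 1, by omega⟩ with hj
      have hje : (π j : ℕ) = (j : ℕ) + 1 := by
        refine IH j ?_ ?_ ?_ <;> · simp only [hj]; omega
      have : π j = π k := Fin.ext (by simp only [hj] at hje ⊢; omega)
      have : j = k := π.injective this
      have : (j : ℕ) = (k : ℕ) := by rw [this]
      simp only [hj] at this
      omega

lemma lower {n : ℕ} {π : Equiv.Perm (Fin n)} (hub : ∀ i : Fin n, (π i : ℕ) ≤ (i : ℕ) + 1)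
    (h3 : Avoids312 (π * π)) : ∀ b : Fin n, (b : ℕ) ≤ (π b : ℕ) + 1 := by
  intro b
  by_contra hbad
  push_neg at hbad
  have hb : (π b : ℕ) + 2 ≤ (b : ℕ) := by omega
  have hch := chain hub b hb
  set v : ℕ := (π b : ℕ) with hv
  have hvb : v + 2 ≤ (b : ℕ) := hb
  set I : Fin n := ⟨v, lt_trans (by omega) b.isLt⟩ with hI
  set J : Fin n := ⟨(b : ℕ) - 1, by have := b.isLt; omega⟩ with hJ
  have hπI : (π I : ℕ) = v + 1 := by
    have := hch I (by simp [hI]) (by simp [hI]; omega)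
    simpa [hI] using this
  have hππI : (π (π I) : ℕ) = v + 2 := by
    have := hch (π I) (by omega) (by omega)
    omega
  have hπJ : π J = b := by
    have := hch J (by simp [hJ]; omega) (by simp [hJ]; omega)
    refine Fin.ext ?_
    simp only [hJ] at this ⊢
    omega
  have hππJ : (π (π J) : ℕ) = v := by rw [hπJ]
  have hπb : π b = I := Fin.ext (by simp [hI]; exact hv.symm)
  have hππb : (π (π b) : ℕ) = v + 1 := by rw [hπb]; exact hπI
  refine h3 ⟨I, J, b, ?_, ?_, ?_, ?_⟩
  · exact Fin.lt_def.mpr (by simp [hI, hJ]; omega)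
  · exact Fin.lt_def.mpr (by simp [hJ]; omega)
  · simp only [Equiv.Perm.mul_apply]
    exact Fin.lt_def.mpr (by omega)
  · simp only [Equiv.Perm.mul_apply]
    exact Fin.lt_def.mpr (by omega)

lemma asc {n : ℕ} {π : Equiv.Perm (Fin n)} (hP : NearId π) :
    ∀ m : ℕ, ∀ j : Fin n, n - (j : ℕ) ≤ m → (π j : ℕ) = (j : ℕ) + 1 → (π (π j) : ℕ) = (j : ℕ) := by
  intro m
  induction m with
  | zero => intro j hm; have := j.isLt; omega
  | succ m IH =>
    intro j hm hj
    have h1 : (π (π j) : ℕ) ≤ (π j : ℕ) + 1 := (hP (π j)).1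
    have h2 : ((π j : Fin n) : ℕ) ≤ (π (π j) : ℕ) + 1 := (hP (π j)).2
    have hne1 : (π (π j) : ℕ) ≠ (j : ℕ) + 1 := by
      intro h
      have : π (π j) = π j := Fin.ext (by omega)
      have : π j = j := π.injective this
      omega
    have hne2 : (π (π j) : ℕ) ≠ (j : ℕ) + 2 := by
      intro h
      have hstep : (π (π j) : ℕ) = ((π j : Fin n) : ℕ) + 1 := by omega
      have hfin := IH (π j) (by omega) hstep
      -- π (π (π j)) = π j  and π j value, so π (π j) = j, contradiction with h
      have : π (π (π j)) = π j := Fin.ext (by omega)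
      have : π (π j) = j := π.injective this
      omega
    omega


lemma desc {n : ℕ} {π : Equiv.Perm (Fin n)} (hP : NearId π) :
    ∀ m : ℕ, ∀ j : Fin n, (j : ℕ) ≤ m → (π j : ℕ) + 1 = (j : ℕ) → (π (π j) : ℕ) = (j : ℕ) := by
  intro m
  induction m with
  | zero => intro j hm hj; omega
  | succ m IH =>
    intro j hm hj
    have h1 : (π (π j) : ℕ) ≤ (π j : ℕ) + 1 := (hP (π j)).1
    have h2 : ((π j : Fin n) : ℕ) ≤ (π (π j) : ℕ) + 1 := (hP (π j)).2
    have hne1 : (π (π j) : ℕ) ≠ (j : ℕ) - 1 := by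
      intro h
      have : π (π j) = π j := Fin.ext (by omega)
      have : π j = j := π.injective this
      omega
    have hne2 : ¬ ((π (π j) : ℕ) + 1 = (j : ℕ) - 1) := by
      intro h
      have hstep : (π (π j) : ℕ) + 1 = ((π j : Fin n) : ℕ) := by omega
      have hfin := IH (π j) (by omega) hstep
      have : π (π (π j)) = π j := Fin.ext (by omega)
      have : π (π j) = j := π.injective this
      omega
    omega

lemma invol {n : ℕ} {π : Equiv.Perm (Fin n)} (hP : NearId π) : π * π = 1 := by
  apply Equiv.ext
  intro i
  rw [Equiv.Perm.mul_apply, Equiv.Perm.one_apply]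
  rcases Nat.lt_trichotomy ((π i : ℕ)) (i : ℕ) with h | h | h
  · have : (π i : ℕ) + 1 = (i : ℕ) := by have := (hP i).2; omega
    exact Fin.ext (desc hP (i : ℕ) i le_rfl this)
  · have : π i = i := Fin.ext h
    rw [this, this]
  · have : (π i : ℕ) = (i : ℕ) + 1 := by have := (hP i).1; omega
    exact Fin.ext (asc hP n i (by omega) this)

lemma back312 {n : ℕ} {π : Equiv.Perm (Fin n)} (hP : NearId π) : Avoids312 π := by
  rintro ⟨i, j, l, hij, hjl, h1, h2⟩
  rw [Fin.lt_def] at hij hjl h1 h2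
  have a1 := (hP i).1
  have a2 := (hP j).2
  omega

lemma back321 {n : ℕ} {π : Equiv.Perm (Fin n)} (hP : NearId π) : Avoids321 π := by
  rintro ⟨i, j, l, hij, hjl, h1, h2⟩
  rw [Fin.lt_def] at hij hjl h1 h2
  have a1 := (hP i).1
  have a2 := (hP l).2
  omega

lemma back312sq {n : ℕ} {π : Equiv.Perm (Fin n)} (hP : NearId π) : Avoids312 (π * π) := by
  rw [invol hP]
  rintro ⟨i, j, l, hij, hjl, h1, h2⟩
  simp only [Equiv.Perm.coe_one, id_eq] at h1 h2
  rw [Fin.lt_def] at hij hjl h1 h2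
  omega

lemma dec_fst {n : ℕ} (π : Equiv.Perm (Fin (n + 1))) :
    (Equiv.Perm.decomposeFin π).1 = π 0 := by
  conv_rhs => rw [← Equiv.symm_apply_apply Equiv.Perm.decomposeFin π]
  rw [← Prod.mk.eta (p := Equiv.Perm.decomposeFin π),
    Equiv.Perm.decomposeFin_symm_apply_zero]

lemma rep0' {n : ℕ} {π : Equiv.Perm (Fin (n + 1))} (h : π 0 = 0) :
    Equiv.Perm.decomposeFin.symm (0, (Equiv.Perm.decomposeFin π).2) = π := by
  rw [← h, ← dec_fst, Prod.mk.eta, Equiv.symm_apply_apply]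

def Phi {n : ℕ} (τ : Equiv.Perm (Fin n)) : Equiv.Perm (Fin (n + 2)) :=
  Equiv.Perm.decomposeFin.symm (1, Equiv.Perm.decomposeFin.symm ((0 : Fin (n + 1)), τ))

lemma Phi_zero {n : ℕ} (τ : Equiv.Perm (Fin n)) : Phi τ 0 = 1 :=
  Equiv.Perm.decomposeFin_symm_apply_zero _ _

lemma Phi_one {n : ℕ} (τ : Equiv.Perm (Fin n)) : Phi τ 1 = 0 := by
  rw [Phi, ← Fin.succ_zero_eq_one, Equiv.Perm.decomposeFin_symm_apply_succ,
    Equiv.Perm.decomposeFin_symm_apply_zero, Fin.succ_zero_eq_one]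
  exact Equiv.swap_apply_right 0 1

lemma Phi_succ2 {n : ℕ} (τ : Equiv.Perm (Fin n)) (i : Fin n) :
    Phi τ i.succ.succ = (τ i).succ.succ := by
  rw [Phi, Equiv.Perm.decomposeFin_symm_apply_succ, Equiv.Perm.decomposeFin_symm_apply_succ]
  simp only [Equiv.swap_self, Equiv.refl_apply]
  refine Equiv.swap_apply_of_ne_of_ne (Fin.succ_ne_zero _) ?_
  rw [← Fin.succ_zero_eq_one]
  intro h
  exact Fin.succ_ne_zero _ (Fin.succ_injective _ h)

lemma nearId_Phi {n : ℕ} (τ : Equiv.Perm (Fin n)) : NearId (Phi τ) ↔ NearId τ := by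
  constructor
  · intro h i
    have := h i.succ.succ
    rw [Phi_succ2] at this
    simp only [Fin.val_succ] at this
    omega
  · intro h i
    induction i using Fin.cases with
    | zero =>
      rw [Phi_zero]
      simp
    | succ j =>
      induction j using Fin.cases with
      | zero =>
        rw [Fin.succ_zero_eq_one, Phi_one]
        simp
      | succ k =>
        rw [Phi_succ2]
        have := h k
        simp only [Fin.val_succ]
        omega

lemma rep1 {n : ℕ} {π : Equiv.Perm (Fin (n + 2))} (h0 : π 0 = 1) (h1 : π 1 = 0) :
    Phi ((Equiv.Perm.decomposeFin (Equiv.Perm.decomposeFin π).2).2) = π := by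
  set σ : Equiv.Perm (Fin (n + 1)) := (Equiv.Perm.decomposeFin π).2 with hσ
  have hπ : Equiv.Perm.decomposeFin.symm (1, σ) = π := by
    rw [← h0, ← dec_fst, hσ, Prod.mk.eta, Equiv.symm_apply_apply]
  have hσ0 : σ 0 = 0 := by
    have h2 : π 1 = Equiv.swap 0 1 ((σ 0).succ) := by
      rw [← hπ, ← Fin.succ_zero_eq_one, Equiv.Perm.decomposeFin_symm_apply_succ]
    rw [h1] at h2
    have h3 : (σ 0).succ = Equiv.swap (0 : Fin (n + 2)) 1 0 := by
      have := congrArg (Equiv.swap (0 : Fin (n + 2)) 1) h2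
      rw [Equiv.swap_apply_self] at this
      exact this.symm
    rw [Equiv.swap_apply_left, ← Fin.succ_zero_eq_one] at h3
    exact Fin.succ_injective _ h3
  rw [Phi, rep0' hσ0, hπ]

def E2 (n : ℕ) : {π : Equiv.Perm (Fin (n + 2)) // NearId π ∧ π 0 = 1 ∧ π 1 = 0} ≃
    {τ : Equiv.Perm (Fin n) // NearId τ} where
  toFun π := ⟨(Equiv.Perm.decomposeFin (Equiv.Perm.decomposeFin π.1).2).2, by
    have := (nearId_Phi (Equiv.Perm.decomposeFin (Equiv.Perm.decomposeFin π.1).2).2).mp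
    rw [rep1 π.2.2.1 π.2.2.2] at this
    exact this π.2.1⟩
  invFun τ := ⟨Phi τ.1, ⟨(nearId_Phi τ.1).mpr τ.2, Phi_zero τ.1, Phi_one τ.1⟩⟩
  left_inv π := Subtype.ext (rep1 π.2.2.1 π.2.2.2)
  right_inv τ := Subtype.ext (by simp [Phi])

lemma ext0_succ {n : ℕ} (τ : Equiv.Perm (Fin n)) (i : Fin n) :
    (Equiv.Perm.decomposeFin.symm ((0 : Fin (n + 1)), τ)) i.succ = (τ i).succ := by
  rw [Equiv.Perm.decomposeFin_symm_apply_succ]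
  simp

lemma nearId_ext0 {n : ℕ} (τ : Equiv.Perm (Fin n)) :
    NearId (Equiv.Perm.decomposeFin.symm ((0 : Fin (n + 1)), τ)) ↔ NearId τ := by
  constructor
  · intro h i
    have := h i.succ
    rw [ext0_succ] at this
    simp only [Fin.val_succ] at this
    omega
  · intro h i
    induction i using Fin.cases with
    | zero =>
      rw [Equiv.Perm.decomposeFin_symm_apply_zero]
      simp
    | succ j =>
      rw [ext0_succ]
      have := h j
      simp only [Fin.val_succ]
      omega

def E1 (n : ℕ) : {π : Equiv.Perm (Fin (n + 1)) // NearId π ∧ π 0 = 0} ≃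
    {τ : Equiv.Perm (Fin n) // NearId τ} where
  toFun π := ⟨(Equiv.Perm.decomposeFin π.1).2, by
    have := (nearId_ext0 (Equiv.Perm.decomposeFin π.1).2).mp
    rw [rep0' π.2.2] at this
    exact this π.2.1⟩
  invFun τ := ⟨Equiv.Perm.decomposeFin.symm (0, τ.1),
    ⟨(nearId_ext0 τ.1).mpr τ.2, Equiv.Perm.decomposeFin_symm_apply_zero _ _⟩⟩
  left_inv π := Subtype.ext (rep0' π.2.2)
  right_inv τ := Subtype.ext (by simp)

lemma pi_one_eq_zero {n : ℕ} {π : Equiv.Perm (Fin (n + 2))} (hP : NearId π) (h0 : π 0 = 1) :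
    π 1 = 0 := by
  have h1 : (π (0 : Fin (n + 2)) : ℕ) = 1 := by rw [h0]; simp
  have := asc hP (n + 2) 0 (by simp) (by simpa using h1)
  rw [h0] at this
  exact Fin.ext (by simpa using this)

lemma countP : ∀ n : ℕ, Nat.card {π : Equiv.Perm (Fin n) // NearId π} = Nat.fib (n + 1) := by
  intro n
  induction n using Nat.strong_induction_on with
  | _ n IH =>
    match n with
    | 0 =>
      rw [Nat.card_congr (Equiv.subtypeUnivEquiv (fun π => by intro i; exact absurd i.2 (by omega)))]
      simp [Nat.card_eq_fintype_card]
    | 1 =>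
      rw [Nat.card_congr (Equiv.subtypeUnivEquiv (fun π => by
        intro i
        have := i.isLt
        have := (π i).isLt
        omega))]
      simp [Nat.card_eq_fintype_card]
    | (m + 2) =>
      classical
      have hiff : ∀ π : Equiv.Perm (Fin (m + 2)), NearId π ↔
          ((NearId π ∧ π 0 = 0) ∨ (NearId π ∧ π 0 = 1 ∧ π 1 = 0)) := by
        intro π
        constructor
        · intro h
          have hb := (h 0).1
          simp only [Fin.val_zero] at hb
          rcases Nat.le_one_iff_eq_zero_or_eq_one.mp hb with h0 | h0
          · exact Or.inl ⟨h, Fin.ext (by simpa using h0)⟩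
          · have hπ0 : π 0 = 1 := Fin.ext (by simpa using h0)
            exact Or.inr ⟨h, hπ0, pi_one_eq_zero h hπ0⟩
        · rintro (⟨h, -⟩ | ⟨h, -⟩) <;> exact h
      have hdisj : Disjoint (fun π : Equiv.Perm (Fin (m + 2)) => NearId π ∧ π 0 = 0)
          (fun π => NearId π ∧ π 0 = 1 ∧ π 1 = 0) := by
        rintro r hr1 hr2 π hπ
        have e1 := (hr1 π hπ).2
        have e2 := (hr2 π hπ).2.1
        rw [e1] at e2
        exact absurd (congrArg Fin.val e2) (by simp)
      calc Nat.card {π : Equiv.Perm (Fin (m + 2)) // NearId π}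
          = Nat.card ({π : Equiv.Perm (Fin (m + 2)) //
            (NearId π ∧ π 0 = 0) ∨ (NearId π ∧ π 0 = 1 ∧ π 1 = 0)}) :=
            Nat.card_congr (Equiv.subtypeEquivRight hiff)
        _ = Nat.card ({π : Equiv.Perm (Fin (m + 2)) // NearId π ∧ π 0 = 0} ⊕
            {π : Equiv.Perm (Fin (m + 2)) // NearId π ∧ π 0 = 1 ∧ π 1 = 0}) :=
            Nat.card_congr (subtypeOrEquiv _ _ hdisj)
        _ = Nat.card {π : Equiv.Perm (Fin (m + 2)) // NearId π ∧ π 0 = 0} +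
            Nat.card {π : Equiv.Perm (Fin (m + 2)) // NearId π ∧ π 0 = 1 ∧ π 1 = 0} :=
            Nat.card_sum
        _ = Nat.card {τ : Equiv.Perm (Fin (m + 1)) // NearId τ} +
            Nat.card {τ : Equiv.Perm (Fin m) // NearId τ} := by
            rw [Nat.card_congr (E1 (m + 1)), Nat.card_congr (E2 m)]
        _ = Nat.fib (m + 2) + Nat.fib (m + 1) := by
            rw [IH (m + 1) (by omega), IH m (by omega)]
        _ = Nat.fib (m + 2 + 1) := by
            show Nat.fib (m + 2) + Nat.fib (m + 1) = Nat.fib (m + 1 + 2)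
            have h := Nat.fib_add_two (n := m + 1)
            have h2 : Nat.fib (m + 1 + 1) = Nat.fib (m + 2) := rfl
            omega

lemma charac {n : ℕ} (π : Equiv.Perm (Fin n)) :
    (Avoids312 π ∧ Avoids321 π ∧ Avoids312 (π * π)) ↔ NearId π := by
  constructor
  · rintro ⟨h1, h2, h3⟩ i
    exact ⟨upper h1 h2 i, lower (upper h1 h2) h3 i⟩
  · intro h
    exact ⟨back312 h, back321 h, back312sq h⟩

theorem stmt8 (n : ℕ) (hn : 1 ≤ n) :
    Nat.card {π : Equiv.Perm (Fin n) // Avoids312 π ∧ Avoids321 π ∧ Avoids312 (π * π)} =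
      Nat.fib (n + 1) := by
  rw [Nat.card_congr (Equiv.subtypeEquivRight charac)]
  exact countP n
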